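/- Let P be an n-element poset and let k be an integer with 0 ≤ k ≤ n−2. Then P has a k-untangled labeling if and only if P has a lower order ideal of size k+2 that is not an antichain. -/

import Mathlib

open scoped Classical

noncomputable section

abbrev Labeling (P : Type*) [Fintype P] : Type _ := P ≃ Fin (Fintype.card P)

variable {P : Type*} [Fintype P] [PartialOrder P]

def IsLinearExt (L : Labeling P) : Prop := ∀ x y : P, x ≤ y → L x ≤ L y

def lSucc (L : Labeling P) (v : P)
    (h : (Finset.univ.filter fun y => v < y).Nonempty) : P :=
  L.symm (((Finset.univ.filter fun y => v < y).image L).min' (h.image _))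

lemma lt_lSucc (L : Labeling P) (v : P)
    (h : (Finset.univ.filter fun y => v < y).Nonempty) : v < lSucc L v h := by
  have hmem := Finset.min'_mem ((Finset.univ.filter fun y => v < y).image L) (h.image _)
  obtain ⟨y, hy, hLy⟩ := Finset.mem_image.mp hmem
  have heq : lSucc L v h = y := by
    unfold lSucc
    rw [← hLy, Equiv.symm_apply_apply]
  rw [heq]
  exact (Finset.mem_filter.mp hy).2

def promChainFrom (L : Labeling P) (v : P) : List P :=
  if h : (Finset.univ.filter fun y => v < y).Nonempty then
    v :: promChainFrom L (lSucc L v h)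
  else [v]
termination_by (Finset.univ.filter fun y => v < y).card
decreasing_by
  apply Finset.card_lt_card
  refine (Finset.ssubset_iff_of_subset ?_).mpr ?_
  · intro z hz
    simp only [Finset.mem_filter, Finset.mem_univ, true_and] at *
    exact lt_trans (lt_lSucc L v h) hz
  · exact ⟨lSucc L v h, by simp [lt_lSucc L v h], by simp⟩

def promote (L : Labeling P) : Labeling P :=
  if h : Nonempty P then
    ((List.formPerm (promChainFrom L (L.symm ⟨0, @Fintype.card_pos P _ h⟩))).trans L).trans
      (finRotate (Fintype.card P)).symm
  else L

/-- The label of `x` under `L`, as an integer in `{1, …, n}`. -/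
def labelOf (L : Labeling P) (x : P) : ℕ := (L x : ℕ) + 1

/-- The largest `a ∈ {0, …, n}` such that for all `j ∈ {n−a+1, …, n}`, the set
`{x ∈ P : j ≤ L(x) ≤ n}` is an upper order ideal of `P`. -/
def frozenA (L : Labeling P) : ℕ :=
  sSup {a : ℕ | a ≤ Fintype.card P ∧
    ∀ j, Fintype.card P - a + 1 ≤ j → j ≤ Fintype.card P →
      IsUpperSet {x : P | j ≤ labelOf L x ∧ labelOf L x ≤ Fintype.card P}}

/-- `x` is frozen with respect to `L` if `n − a + 1 ≤ L(x) ≤ n`, where `a` is as in `frozenA`. -/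
def IsFrozen (L : Labeling P) (x : P) : Prop :=
  Fintype.card P - frozenA L + 1 ≤ labelOf L x

/-- A labeling of an `n`-element poset is tangled if `n ≥ 2` and `∂^{n−2}(L)` is
not a linear extension. -/
def IsTangled (L : Labeling P) : Prop :=
  2 ≤ Fintype.card P ∧ ¬ IsLinearExt (promote^[Fintype.card P - 2] L)

/-- A labeling of an `n`-element poset is `k`-untangled if `n ≥ k + 2` and
`∂^{n−k−2}(L)` is not a linear extension. -/
def IsUntangled (k : ℕ) (L : Labeling P) : Prop :=
  k + 2 ≤ Fintype.card P ∧ ¬ IsLinearExt (promote^[Fintype.card P - k - 2] L)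

/-- The comparability graph of a poset. -/
def compGraph (P : Type*) [PartialOrder P] : SimpleGraph P where
  Adj x y := x ≠ y ∧ (x ≤ y ∨ y ≤ x)
  symm := by
    constructor
    intro x y hxy
    exact ⟨hxy.1.symm, hxy.2.symm⟩
  loopless := by
    constructor
    intro x hx
    exact hx.1 rfl

/-- The standardization of an injective map from a finite type into a linear order:
the unique relabeling by `{1, …, n}` with the same relative order of values. -/
def standardize {R β : Type*} [Fintype R] [LinearOrder β]
    (f : R → β) (hf : Function.Injective f) : R ≃ Fin (Fintype.card R) :=
  have hcard : (Finset.univ.image f).card = Fintype.card R := by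
    rw [Finset.card_image_of_injective _ hf, Finset.card_univ]
  (Equiv.ofBijective (fun x => (⟨f x, by simp⟩ : ↥(Finset.univ.image f)))
    (by
      rw [Fintype.bijective_iff_injective_and_card]
      refine ⟨fun a b hab => hf (congrArg Subtype.val hab), ?_⟩
      rw [Fintype.card_coe, hcard])).trans
    ((Finset.univ.image f).orderIsoOfFin hcard).symm.toEquiv

/-- The toggle operator `τ_{k+1}`: it swaps the labels `k+1` and `k+2` (i.e. the
`Fin`-labels `k` and `k+1`) unless `L⁻¹(k+1) <_P L⁻¹(k+2)`. -/
def toggle (L : Labeling P) (k : ℕ) : Labeling P :=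
  if h : k + 1 < Fintype.card P then
    if L.symm ⟨k, Nat.lt_of_succ_lt h⟩ < L.symm ⟨k + 1, h⟩ then L
    else L.trans (Equiv.swap ⟨k, Nat.lt_of_succ_lt h⟩ ⟨k + 1, h⟩)
  else L

/-- An element `x` is `L`-golden if every element strictly above it has a larger label. -/
def IsGolden (L : Labeling P) (x : P) : Prop := ∀ y : P, x < y → L x < L y

/-- The largest label `n` of an `n`-element poset, as an element of `Fin n`. -/
def topFin (P : Type*) [Fintype P] [Nonempty P] : Fin (Fintype.card P) :=
  ⟨Fintype.card P - 1, Nat.sub_lt Fintype.card_pos Nat.one_pos⟩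


/-! ### auxiliary lemmas -/

lemma getLast_congr' {α : Type*} {l l' : List α} (h : l = l') (h1 : l ≠ []) (h' : l' ≠ []) :
    l.getLast h1 = l'.getLast h' := by subst h; rfl

lemma finRotate_symm_val {n : ℕ} (j : Fin n) :
    (((finRotate n).symm j : Fin n) : ℕ) = if (j : ℕ) = 0 then n - 1 else (j : ℕ) - 1 := by
  cases n with
  | zero => exact j.elim0
  | succ m =>
    have h : (finRotate (m + 1)).symm j = j - 1 := by
      apply (finRotate (m + 1)).injective
      simp [finRotate_succ_apply, sub_add_cancel]
    rw [h, Fin.coe_sub_one]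
    rcases eq_or_ne j 0 with h0 | h0
    · simp [h0]
    · rw [if_neg h0, if_neg (by intro h; exact h0 (Fin.ext (by simp [h])))]

lemma promChainFrom_eq_cons (L : Labeling P) (v : P) :
    ∃ rest, promChainFrom L v = v :: rest := by
  rw [promChainFrom]
  split <;> exact ⟨_, rfl⟩

lemma promChainFrom_ne_nil (L : Labeling P) (v : P) : promChainFrom L v ≠ [] := by
  obtain ⟨rest, h⟩ := promChainFrom_eq_cons L v
  simp [h]

lemma promChainFrom_chain' (L : Labeling P) (v : P) :
    List.Chain' (fun a b => ∃ h, b = lSucc L a h) (promChainFrom L v) := by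
  induction v using promChainFrom.induct L with
  | case1 v h ih =>
    rw [promChainFrom, dif_pos h]
    obtain ⟨rest, hrest⟩ := promChainFrom_eq_cons L (lSucc L v h)
    rw [hrest] at ih ⊢
    exact List.IsChain.cons_cons ⟨h, rfl⟩ ih
  | case2 v h =>
    rw [promChainFrom, dif_neg h]
    exact List.isChain_singleton v

lemma promChainFrom_chain'_lt (L : Labeling P) (v : P) :
    List.Chain' (· < ·) (promChainFrom L v) :=
  (promChainFrom_chain' L v).imp (fun a b hab => by obtain ⟨h, hb⟩ := hab; exact hb ▸ lt_lSucc L _ h)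

lemma promChainFrom_nodup (L : Labeling P) (v : P) : (promChainFrom L v).Nodup :=
  ((List.isChain_iff_pairwise).mp (promChainFrom_chain'_lt L v)).imp ne_of_lt

lemma promChainFrom_le (L : Labeling P) (v : P) :
    ∀ w ∈ promChainFrom L v, v ≤ w := by
  induction v using promChainFrom.induct L with
  | case1 v h ih =>
    rw [promChainFrom, dif_pos h]
    intro w hw
    rcases List.mem_cons.mp hw with rfl | hw
    · exact le_refl w
    · exact le_of_lt (lt_of_lt_of_le (lt_lSucc L v h) (ih w hw))
  | case2 v h =>
    rw [promChainFrom, dif_neg h]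
    intro w hw
    rcases List.mem_cons.mp hw with rfl | hw
    · exact le_refl w
    · simp at hw

lemma promChainFrom_getLast_max (L : Labeling P) (v : P) (z : P) :
    ¬ (promChainFrom L v).getLast (promChainFrom_ne_nil L v) < z := by
  induction v using promChainFrom.induct L with
  | case1 v h ih =>
    intro hz
    apply ih
    have hEq : promChainFrom L v = v :: promChainFrom L (lSucc L v h) := by
      rw [promChainFrom, dif_pos h]
    have heq2 : (promChainFrom L v).getLast (promChainFrom_ne_nil L v)
        = (promChainFrom L (lSucc L v h)).getLast (promChainFrom_ne_nil L _) := by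
      rw [getLast_congr' hEq (promChainFrom_ne_nil L v) (by simp)]
      exact List.getLast_cons (promChainFrom_ne_nil L _)
    rwa [heq2] at hz
  | case2 v h =>
    intro hz
    apply h
    have hEq : promChainFrom L v = [v] := by rw [promChainFrom, dif_neg h]
    have hv : (promChainFrom L v).getLast (promChainFrom_ne_nil L v) = v := by
      rw [getLast_congr' hEq (promChainFrom_ne_nil L v) (by simp)]
      rfl
    rw [hv] at hz
    exact ⟨z, by simp [hz]⟩
lemma promChainFrom_formPerm_ne_last (L : Labeling P) (v z : P)
    (hz : z ∈ promChainFrom L v)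
    (hne : z ≠ (promChainFrom L v).getLast (promChainFrom_ne_nil L v)) :
    ∃ h, (promChainFrom L v).formPerm z = lSucc L z h := by
  set l := promChainFrom L v with hl
  obtain ⟨i, hi, rfl⟩ := List.getElem_of_mem hz
  have hnd : l.Nodup := promChainFrom_nodup L v
  have hlast : l.getLast (promChainFrom_ne_nil L v) = l[l.length - 1] :=
    List.getLast_eq_getElem (promChainFrom_ne_nil L v)
  have hione : i + 1 < l.length := by
    rcases Nat.lt_or_ge (i + 1) l.length with h | h
    · exact h
    · exfalso
      apply hne
      rw [hlast]
      congr 1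
      omega
  have hform : l.formPerm l[i] = l[i + 1] :=
    List.formPerm_apply_lt_getElem l hnd i hione
  have hchain := List.isChain_iff_getElem.mp (promChainFrom_chain' L v) i (by rw [← hl]; omega)
  obtain ⟨h, hsucc⟩ := hchain
  exact ⟨h, by rw [hform]; exact hsucc⟩

lemma promChainFrom_formPerm_getLast (L : Labeling P) (v : P) :
    (promChainFrom L v).formPerm
      ((promChainFrom L v).getLast (promChainFrom_ne_nil L v)) = v := by
  obtain ⟨rest, hrest⟩ := promChainFrom_eq_cons L v
  rw [getLast_congr' hrest (promChainFrom_ne_nil L v) (by simp), hrest]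
  exact List.formPerm_apply_getLast v rest

lemma promChainFrom_head_mem (L : Labeling P) (v : P) : v ∈ promChainFrom L v := by
  obtain ⟨rest, hrest⟩ := promChainFrom_eq_cons L v
  rw [hrest]; exact List.mem_cons_self

lemma promote_apply (L : Labeling P) (hP : Nonempty P) (z : P) :
    promote L z = (finRotate (Fintype.card P)).symm
      (L ((promChainFrom L (L.symm ⟨0, @Fintype.card_pos P _ hP⟩)).formPerm z)) := by
  unfold promote
  rw [dif_pos hP]
  rfl

def SortedTop (a : ℕ) (L : Labeling P) : Prop :=
  ∀ x y : P, x < y → Fintype.card P - a ≤ (L x : ℕ) → (L x : ℕ) < (L y : ℕ)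
lemma sortedTop_promote (hP : Nonempty P) (a : ℕ) (L : Labeling P)
    (hL : SortedTop a L) : SortedTop (a + 1) (promote L) := by
  intro x y hxy hx
  set n := Fintype.card P with hn
  set v0 : P := L.symm ⟨0, @Fintype.card_pos P _ hP⟩ with hv0
  set l := promChainFrom L v0 with hl
  set g := l.getLast (promChainFrom_ne_nil L v0) with hg
  have hform_last : l.formPerm g = v0 := promChainFrom_formPerm_getLast L v0
  have hlab : ∀ z : P, z ≠ g → (L (l.formPerm z) : ℕ) ≠ 0 := by
    intro z hz h0
    have h1 : l.formPerm z = v0 := by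
      apply L.injective
      rw [hv0, Equiv.apply_symm_apply]
      exact Fin.ext h0
    exact hz ((l.formPerm).injective (h1.trans hform_last.symm))
  have happ : ∀ z : P, z ≠ g → ((promote L) z : ℕ) = (L (l.formPerm z) : ℕ) - 1 := by
    intro z hz
    rw [promote_apply L hP z, finRotate_symm_val, if_neg (hlab z hz)]
  have happ_g : ((promote L) g : ℕ) = n - 1 := by
    rw [promote_apply L hP g]
    rw [finRotate_symm_val]
    have : (L (l.formPerm g) : ℕ) = 0 := by rw [hform_last, hv0, Equiv.apply_symm_apply]
    rw [if_pos this]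
  have hg_max : ∀ z : P, ¬ g < z := fun z => promChainFrom_getLast_max L v0 z
  have hxg : x ≠ g := fun h => hg_max y (h ▸ hxy)
  by_cases hyg : y = g
  · rw [hyg, happ_g]
    rw [happ x hxg] at hx ⊢
    have h1 : (1 : ℕ) ≤ (L (l.formPerm x) : ℕ) := Nat.one_le_iff_ne_zero.mpr (hlab x hxg)
    have h2 : (L (l.formPerm x) : ℕ) < n := (L (l.formPerm x)).isLt
    omega
  · rw [happ x hxg] at hx ⊢
    rw [happ y hyg]
    have h1 : (1 : ℕ) ≤ (L (l.formPerm x) : ℕ) := Nat.one_le_iff_ne_zero.mpr (hlab x hxg)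
    have hyσ : y ≤ l.formPerm y := by
      by_cases hy : y ∈ l
      · obtain ⟨h', heq⟩ := promChainFrom_formPerm_ne_last L v0 y hy hyg
        exact (heq ▸ lt_lSucc L y h').le
      · rw [List.formPerm_apply_of_notMem hy]
    have key : (L (l.formPerm x) : ℕ) < (L (l.formPerm y) : ℕ) := by
      have hxσy : x < l.formPerm y := lt_of_lt_of_le hxy hyσ
      by_cases hx' : x ∈ l
      · obtain ⟨h', heq⟩ := promChainFrom_formPerm_ne_last L v0 x hx' hxg
        have hmem : l.formPerm y ∈ Finset.univ.filter fun z => x < z := by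
          simp [hxσy]
        have hle : L (l.formPerm x) ≤ L (l.formPerm y) := by
          rw [heq]
          unfold lSucc
          rw [Equiv.apply_symm_apply]
          exact Finset.min'_le _ _ (Finset.mem_image_of_mem _ hmem)
        have hle' : (L (l.formPerm x) : ℕ) ≤ (L (l.formPerm y) : ℕ) := hle
        have hne2 : (L (l.formPerm x) : ℕ) ≠ (L (l.formPerm y) : ℕ) := by
          intro h
          exact hxy.ne ((l.formPerm).injective (L.injective (Fin.ext h)))
        exact lt_of_le_of_ne hle' hne2
      · rw [List.formPerm_apply_of_notMem hx'] at hx h1 ⊢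
        exact hL x (l.formPerm y) hxσy (by omega)
    omega
lemma sortedTop_iterate (hP : Nonempty P) (t : ℕ) (L : Labeling P) :
    SortedTop t (promote^[t] L) := by
  induction t with
  | zero =>
    intro x y hxy hx
    exact absurd hx (by have := (L x).isLt; omega)
  | succ s ih =>
    rw [Function.iterate_succ_apply']
    exact sortedTop_promote hP s _ ih

/-- For `0 ≤ k ≤ n − 2`, the poset `P` has a `k`-untangled labeling
if and only if it has a lower order ideal of size `k + 2` that is not an antichain. -/
theorem untangled_iff_lowerSet (k : ℕ) (hk : k + 2 ≤ Fintype.card P) :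
    (∃ L : Labeling P, IsUntangled k L) ↔
      ∃ Q : Set P, IsLowerSet Q ∧ Nat.card Q = k + 2 ∧ ¬ IsAntichain (· ≤ ·) Q := by
  have hP : Nonempty P := Fintype.card_pos_iff.mp (by omega)
  set n := Fintype.card P with hn
  have ht : n - k - 2 = n - (k + 2) := by omega
  constructor
  · rintro ⟨L, hk2, hnl⟩
    set t := n - k - 2 with htdef
    set M := promote^[t] L with hM
    have hsort : SortedTop t M := sortedTop_iterate hP t L
    have hnt : n - t = k + 2 := by omega
    obtain ⟨u, w, huw, hMuw⟩ : ∃ u w : P, u ≤ w ∧ ¬ (M u ≤ M w) := by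
      by_contra hc
      push_neg at hc
      exact hnl fun u w huw => hc u w huw
    have hne : u ≠ w := fun h => hMuw (h ▸ le_refl (M u))
    have hlt : u < w := lt_of_le_of_ne huw hne
    have hMwu : (M w : ℕ) < (M u : ℕ) := by
      have := Fin.lt_def.mp (lt_of_not_ge hMuw)
      exact this
    have hMu : (M u : ℕ) < k + 2 := by
      by_contra hc
      push_neg at hc
      have := hsort u w hlt (by omega)
      omega
    have hMw : (M w : ℕ) < k + 2 := by omega
    refine ⟨{z : P | (M z : ℕ) < k + 2}, ?_, ?_, ?_⟩
    · intro b c hcb hb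
      rcases eq_or_lt_of_le hcb with rfl | hlt2
      · exact hb
      · by_contra hc
        simp only [Set.mem_setOf_eq, not_lt] at hc hb
        have := hsort c b hlt2 (by omega)
        omega
    · have e1 : {z : P | (M z : ℕ) < k + 2} ≃ {j : Fin n // (j : ℕ) < k + 2} :=
        M.subtypeEquiv (fun z => Iff.rfl)
      have e2 : {j : Fin n // (j : ℕ) < k + 2} ≃ Fin (k + 2) :=
        { toFun := fun j => ⟨(j : Fin n), j.2⟩
          invFun := fun i => ⟨⟨(i : ℕ), lt_of_lt_of_le i.isLt hk⟩, i.isLt⟩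
          left_inv := fun j => by ext; rfl
          right_inv := fun i => by ext; rfl }
      rw [Nat.card_congr (e1.trans e2), Nat.card_eq_fintype_card, Fintype.card_fin]
    · intro hA
      exact hA (Set.mem_setOf_eq ▸ hMu) (Set.mem_setOf_eq ▸ hMw) hne huw
  · rintro ⟨Q, hQlow, hQcard, hQna⟩
    obtain ⟨x, hxQ, y, hyQ, hne, hxy⟩ :
        ∃ x, x ∈ Q ∧ ∃ y, y ∈ Q ∧ x ≠ y ∧ x ≤ y := by
      by_contra hc
      push_neg at hc
      exact hQna fun a ha b hb hab => hc a ha b hb hab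
    have hxlty : x < y := lt_of_le_of_ne hxy hne
    set t := n - k - 2 with htdef
    have hQc' : Fintype.card ↥Q = k + 2 := by
      rw [← Nat.card_eq_fintype_card]; exact hQcard
    have hcompl : Fintype.card ↥(Qᶜ) = t := by
      rw [Fintype.card_compl_set, hQc']; omega
    set xx : ↥Q := ⟨x, hxQ⟩ with hxx
    set yy : ↥Q := ⟨y, hyQ⟩ with hyy
    have hxxyy : xx ≠ yy := fun h => hne (congrArg Subtype.val h)
    set g0 : ↥Q ≃ Fin (k + 2) := Fintype.equivFinOfCardEq hQc' with hg0
    set g1 : ↥Q ≃ Fin (k + 2) := g0.trans (Equiv.swap (g0 yy) 0) with hg1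
    set g : ↥Q ≃ Fin (k + 2) := g1.trans (Equiv.swap (g1 xx) 1) with hgdef
    have hzo : (0 : Fin (k + 2)) ≠ 1 := by
      intro h
      have := congrArg Fin.val h
      simp [Fin.val_one] at this
    have hg1y : g1 yy = 0 := by
      rw [hg1]; simp [Equiv.swap_apply_left]
    have hgy : g yy = 0 := by
      rw [hgdef]
      simp only [Equiv.trans_apply, hg1y]
      rw [Equiv.swap_apply_of_ne_of_ne]
      · intro h
        exact hxxyy (g1.injective (h.symm.trans hg1y.symm))
      · exact hzo
    have hgx : g xx = 1 := by
      rw [hgdef]; simp [Equiv.swap_apply_left]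
    set e3 : ↥(Qᶜ) ≃ Fin t := Fintype.equivFinOfCardEq hcompl with he3
    have hnt : t + (k + 2) = n := by omega
    set L : Labeling P :=
      ((Equiv.Set.sumCompl Q).symm.trans
        ((Equiv.sumComm ↥Q ↥(Qᶜ)).trans
          ((e3.sumCongr g).trans (finSumFinEquiv.trans (finCongr hnt))))) with hLdef
    have hQval : ∀ q (hq : q ∈ Q), (L q : ℕ) = t + (g ⟨q, hq⟩ : ℕ) := by
      intro q hq
      show ((finCongr hnt) (finSumFinEquiv ((e3.sumCongr g)
        ((Equiv.sumComm ↥Q ↥(Qᶜ)) ((Equiv.Set.sumCompl Q).symm q)))) : ℕ) = _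
      rw [Equiv.Set.sumCompl_symm_apply_of_mem hq]
      simp [finSumFinEquiv_apply_right]
    have main : ∀ s, s ≤ t → ∀ q, ∀ hq : q ∈ Q,
        ((promote^[s] L) q : ℕ) = (L q : ℕ) - s := by
      intro s
      induction s with
      | zero => intro _ q hq; simp
      | succ s ih =>
        intro hs q hq
        have ihs := ih (by omega)
        rw [Function.iterate_succ_apply']
        set L' := promote^[s] L with hL'
        set v0 : P := L'.symm ⟨0, @Fintype.card_pos P _ hP⟩ with hv0
        have hv0Q : v0 ∉ Q := by
          intro hv
          have h1 := ihs v0 hv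
          have h0 : (L' v0 : ℕ) = 0 := by rw [hv0, Equiv.apply_symm_apply]
          have hge : t ≤ (L v0 : ℕ) := by rw [hQval v0 hv]; omega
          omega
        have hchain : q ∉ promChainFrom L' v0 := fun hmem =>
          hv0Q (hQlow (promChainFrom_le L' v0 q hmem) hq)
        rw [promote_apply L' hP q, List.formPerm_apply_of_notMem hchain,
          finRotate_symm_val]
        have hval := ihs q hq
        have hge : t ≤ (L q : ℕ) := by rw [hQval q hq]; omega
        rw [if_neg (by omega)]
        omega
    have hLx : (L x : ℕ) = t + 1 := by
      rw [hQval x hxQ]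
      have : (⟨x, hxQ⟩ : ↥Q) = xx := rfl
      rw [this, hgx, Fin.val_one]
    have hLy : (L y : ℕ) = t := by
      rw [hQval y hyQ]
      have : (⟨y, hyQ⟩ : ↥Q) = yy := rfl
      rw [this, hgy, Fin.val_zero]
      omega
    refine ⟨L, hk, ?_⟩
    intro hlin
    have hMx : ((promote^[n - k - 2] L) x : ℕ) = 1 := by
      rw [main t le_rfl x hxQ, hLx]; omega
    have hMy : ((promote^[n - k - 2] L) y : ℕ) = 0 := by
      rw [main t le_rfl y hyQ, hLy]; omega
    have := hlin x y hxy
    rw [Fin.le_def, hMx, hMy] at this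
    omega

end
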